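/- For every positive integer n, ∑_{λ∈L_n} x^{|λ_o|} y^{|λ_e|} = ∏_{i=1}^{n} 1/(1 − x^i y^{i−1}) as formal power series in the two variables x and y. -/

import Mathlib

namespace LHProof

/-- minimal head prependable to a lecture-hall list `t`:  `⌈(L+1)·b/L⌉` where `L = t.length`. -/
def hb : List ℕ → ℕ
  | [] => 0
  | b :: t => ((t.length + 2) * b + t.length) / (t.length + 1)

/-- lecture hall condition for a list (length n, coefficient between positions i,i+1 is
(n-i) vs (n-1-i)). -/
def LHL : List ℕ → Prop
  | x :: y :: t => ((t.length + 2) * y ≤ (t.length + 1) * x) ∧ LHL (y :: t)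
  | _ => True

lemma LHL_nil : LHL [] := trivial
lemma LHL_single (x : ℕ) : LHL [x] := trivial

lemma hb_cons_le_iff (x b : ℕ) (s : List ℕ) :
    hb (b :: s) ≤ x ↔ (s.length + 2) * b ≤ (s.length + 1) * x := by
  unfold hb
  rw [Nat.div_le_iff_le_mul_add_pred (by omega)]
  omega

lemma LHL_cons_iff (x : ℕ) (t : List ℕ) : LHL (x :: t) ↔ hb t ≤ x ∧ LHL t := by
  cases t with
  | nil => simp [LHL, hb]
  | cons b s =>
      simp only [LHL]
      exact and_congr_left' (hb_cons_le_iff x b s).symm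

/-- key division identity : ⌊L·x/(L+1)⌋ + ⌈x/(L+1)⌉ = x. -/
lemma div_ceil_key (L x : ℕ) : (L * x) / (L + 1) + (x + L) / (L + 1) = x := by
  obtain ⟨q, r, hr, hx⟩ : ∃ q r, r < L + 1 ∧ x = (L + 1) * q + r :=
    ⟨x / (L + 1), x % (L + 1), Nat.mod_lt _ (by omega), (Nat.div_add_mod _ _).symm⟩
  subst hx
  rcases Nat.eq_zero_or_pos r with h0 | h0
  · subst h0
    have e1 : L * ((L + 1) * q + 0) = (L + 1) * (L * q) := by ring
    have e2 : (L + 1) * q + 0 + L = (L + 1) * q + L := by ring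
    rw [e1, e2, Nat.mul_div_cancel_left _ (by omega), Nat.mul_add_div (by omega),
      Nat.div_eq_of_lt (by omega)]
    ring
  · obtain ⟨s, rfl⟩ : ∃ s, r = s + 1 := ⟨r - 1, by omega⟩
    have hs : s ≤ L := by omega
    have e1 : L * ((L + 1) * q + (s + 1)) = (L + 1) * (L * q + s) + (L - s) := by
      zify [hs]; ring
    have e2 : (L + 1) * q + (s + 1) + L = (L + 1) * (q + 1) + s := by ring
    rw [e1, e2, Nat.mul_add_div (by omega), Nat.mul_add_div (by omega),
      Nat.div_eq_of_lt (by omega), Nat.div_eq_of_lt (by omega)]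
    ring

lemma hb_cons_cons (x y : ℕ) (t : List ℕ) :
    hb (x :: y :: t) = x + (x + (t.length + 1)) / (t.length + 2) := by
  show ((t.length + 3) * x + (t.length + 1)) / (t.length + 2) = _
  have e : (t.length + 3) * x + (t.length + 1)
      = (t.length + 2) * x + (x + (t.length + 1)) := by ring
  rw [e, Nat.mul_add_div (by omega)]


/-- (sum of even-0-indexed entries, sum of odd-0-indexed entries). -/
def sOE : List ℕ → ℕ × ℕ
  | [] => (0, 0)
  | x :: t => ((sOE t).2 + x, (sOE t).1)

def sO (l : List ℕ) : ℕ := (sOE l).1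
def sE (l : List ℕ) : ℕ := (sOE l).2

@[simp] lemma sO_nil : sO [] = 0 := rfl
@[simp] lemma sE_nil : sE [] = 0 := rfl
@[simp] lemma sO_cons (x : ℕ) (t : List ℕ) : sO (x :: t) = sE t + x := rfl
@[simp] lemma sE_cons (x : ℕ) (t : List ℕ) : sE (x :: t) = sO t := rfl

/-- the reflection involution on even-1-indexed (odd-0-indexed) entries. -/
def psi : List ℕ → List ℕ
  | x :: y :: t =>
      x :: (((t.length + 1) * x) / (t.length + 2) + hb t - y) :: psi t
  | l => l

@[simp] lemma psi_nil : psi [] = [] := rfl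
@[simp] lemma psi_single (x : ℕ) : psi [x] = [x] := rfl
lemma psi_cons_cons (x y : ℕ) (t : List ℕ) :
    psi (x :: y :: t)
      = x :: (((t.length + 1) * x) / (t.length + 2) + hb t - y) :: psi t := rfl

@[simp] lemma psi_length (l : List ℕ) : (psi l).length = l.length := by
  induction l using psi.induct with
  | case1 x y t ih => simp [psi_cons_cons, ih]
  | case2 l h => cases l with
      | nil => rfl
      | cons a t => cases t with
          | nil => rfl
          | cons b s => exact absurd rfl (h a b s)

lemma hb_psi (l : List ℕ) : hb (psi l) = hb l := by
  cases l with
  | nil => rfl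
  | cons x t =>
      cases t with
      | nil => rfl
      | cons y s => simp [psi_cons_cons, hb]

lemma sO_psi (l : List ℕ) : sO (psi l) = sO l := by
  induction l using psi.induct with
  | case1 x y t ih => simp [psi_cons_cons, ih]
  | case2 l h => cases l with
      | nil => rfl
      | cons a t => cases t with
          | nil => rfl
          | cons b s => exact absurd rfl (h a b s)

section withLHL

/-- facts from `LHL (x :: y :: t)`. -/
lemma LHL_cons_cons_iff (x y : ℕ) (t : List ℕ) :
    LHL (x :: y :: t) ↔
      y ≤ ((t.length + 1) * x) / (t.length + 2) ∧ hb t ≤ y ∧ LHL t := by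
  rw [LHL_cons_iff, LHL_cons_iff, hb_cons_le_iff,
    Nat.le_div_iff_mul_le (show 0 < t.length + 2 by omega), Nat.mul_comm y]

lemma LHL_psi {l : List ℕ} (h : LHL l) : LHL (psi l) := by
  induction l using psi.induct with
  | case2 l h2 => cases l with
      | nil => exact h
      | cons a t => cases t with
          | nil => exact h
          | cons b s => exact absurd rfl (h2 a b s)
  | case1 x y t ih =>
      rw [LHL_cons_cons_iff] at h
      obtain ⟨hy1, hy2, ht⟩ := h
      rw [psi_cons_cons, LHL_cons_cons_iff, psi_length, hb_psi]
      refine ⟨?_, ?_, ih ht⟩ <;>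
        · generalize hD : ((t.length + 1) * x) / (t.length + 2) = D at hy1 ⊢
          omega

lemma psi_psi {l : List ℕ} (h : LHL l) : psi (psi l) = l := by
  induction l using psi.induct with
  | case2 l h2 => cases l with
      | nil => rfl
      | cons a t => cases t with
          | nil => rfl
          | cons b s => exact absurd rfl (h2 a b s)
  | case1 x y t ih =>
      rw [LHL_cons_cons_iff] at h
      obtain ⟨hy1, hy2, ht⟩ := h
      have hA : (t.length + 1) * x / (t.length + 2) + hb t
          - ((t.length + 1) * x / (t.length + 2) + hb t - y) = y := by
        generalize hD : ((t.length + 1) * x) / (t.length + 2) = D at hy1 ⊢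
        omega
      rw [psi_cons_cons, psi_cons_cons, psi_length, hb_psi, ih ht, hA]

/-- THE key identity: `sE l + sE (psi l) + hb l = 2 * sO l`. -/
lemma key_identity {l : List ℕ} (h : LHL l) :
    sE l + sE (psi l) + hb l = 2 * sO l := by
  induction l using psi.induct with
  | case2 l h2 => cases l with
      | nil => rfl
      | cons a t => cases t with
          | nil => simp [hb]
          | cons b s => exact absurd rfl (h2 a b s)
  | case1 x y t ih =>
      rw [LHL_cons_cons_iff] at h
      obtain ⟨hy1, hy2, ht⟩ := h
      have hk := div_ceil_key (t.length + 1) x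
      have e : t.length + 1 + 1 = t.length + 2 := rfl
      rw [e] at hk
      rw [psi_cons_cons, hb_cons_cons]
      simp only [sE_cons, sO_cons]
      have hih := ih ht
      generalize hD : ((t.length + 1) * x) / (t.length + 2) = D at hy1 hk ⊢
      generalize hC : (x + (t.length + 1)) / (t.length + 2) = C at hk ⊢
      omega

end withLHL

/-- weight A : Σ mᵢ·(i+1) (1-indexed positions from the head). -/
def wA : List ℕ → ℕ
  | [] => 0
  | x :: t => x + wA t + t.sum

/-- weight B : Σ mᵢ·i. -/
def wB : List ℕ → ℕ
  | [] => 0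
  | _ :: t => wA t

@[simp] lemma wA_nil : wA [] = 0 := rfl
@[simp] lemma wB_nil : wB [] = 0 := rfl
lemma wA_cons (x : ℕ) (t : List ℕ) : wA (x :: t) = x + wA t + t.sum := rfl
lemma wB_cons (x : ℕ) (t : List ℕ) : wB (x :: t) = wA t := rfl

lemma wA_eq_wB_add_sum (l : List ℕ) : wA l = wB l + l.sum := by
  induction l with
  | nil => rfl
  | cons x t ih => rw [wA_cons, wB_cons, List.sum_cons]; omega

/-- the main bijection, lecture hall lists → free lists. -/
def Phi : List ℕ → List ℕ
  | [] => []
  | x :: t => (x - hb t) :: Phi (psi t)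
  termination_by l => l.length
  decreasing_by simp

/-- inverse of `Phi`. -/
def Xi : List ℕ → List ℕ
  | [] => []
  | k :: m => (k + hb (psi (Xi m))) :: psi (Xi m)

@[simp] lemma Phi_nil : Phi [] = [] := by rw [Phi]
lemma Phi_cons (x : ℕ) (t : List ℕ) : Phi (x :: t) = (x - hb t) :: Phi (psi t) := by rw [Phi]

@[simp] lemma Phi_length (l : List ℕ) : (Phi l).length = l.length := by
  induction l using Phi.induct with
  | case1 => simp
  | case2 x t ih => rw [Phi_cons]; simp [ih]

@[simp] lemma Xi_length (m : List ℕ) : (Xi m).length = m.length := by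
  induction m with
  | nil => rfl
  | cons k m ih => simp [Xi, ih]

lemma LHL_Xi (m : List ℕ) : LHL (Xi m) := by
  induction m with
  | nil => exact LHL_nil
  | cons k m ih =>
      rw [Xi, LHL_cons_iff]
      exact ⟨by omega, LHL_psi ih⟩

lemma Phi_Xi (m : List ℕ) : Phi (Xi m) = m := by
  induction m with
  | nil => simp [Xi]
  | cons k m ih =>
      rw [Xi, Phi_cons, psi_psi (LHL_Xi m), ih, Nat.add_sub_cancel]

lemma Xi_Phi {l : List ℕ} (h : LHL l) : Xi (Phi l) = l := by
  induction l using Phi.induct with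
  | case1 => simp [Xi]
  | case2 x t ih =>
      rw [LHL_cons_iff] at h
      obtain ⟨hx, ht⟩ := h
      rw [Phi_cons, Xi, ih (LHL_psi ht), psi_psi ht]
      congr 1
      omega

lemma Phi_stats {l : List ℕ} (h : LHL l) : wA (Phi l) = sO l ∧ wB (Phi l) = sE l := by
  induction l using Phi.induct with
  | case1 => simp
  | case2 x t ih =>
      rw [LHL_cons_iff] at h
      obtain ⟨hx, ht⟩ := h
      obtain ⟨ihA, ihB⟩ := ih (LHL_psi ht)
      rw [sO_psi] at ihA
      have hkey := key_identity ht
      have hsum := wA_eq_wB_add_sum (Phi (psi t))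
      rw [Phi_cons, wA_cons, wB_cons, sO_cons, sE_cons]
      omega

/-- the list-level equivalence. -/
def listEquiv (n a b : ℕ) :
    {L : List ℕ // L.length = n ∧ LHL L ∧ sO L = a ∧ sE L = b} ≃
      {M : List ℕ // M.length = n ∧ wA M = a ∧ wB M = b} where
  toFun L := ⟨Phi L.1, by
    obtain ⟨hlen, hLH, hO, hE⟩ := L.2
    exact ⟨by simp [hlen], by rw [(Phi_stats hLH).1, hO], by rw [(Phi_stats hLH).2, hE]⟩⟩
  invFun M := ⟨Xi M.1, by
    obtain ⟨hlen, hA, hB⟩ := M.2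
    have h1 := (Phi_stats (LHL_Xi M.1)).1
    have h2 := (Phi_stats (LHL_Xi M.1)).2
    rw [Phi_Xi] at h1 h2
    exact ⟨by simp [hlen], LHL_Xi M.1, by omega, by omega⟩⟩
  left_inv L := Subtype.ext (Xi_Phi L.2.2.1)
  right_inv M := Subtype.ext (Phi_Xi M.1)

/-! ## Bridges between `Fin n → ℕ` and lists -/

lemma stat_bridge (n : ℕ) (l : Fin n → ℕ) :
    (∑ i ∈ Finset.univ.filter (fun i : Fin n => i.1 % 2 = 0), l i) = sO (List.ofFn l) ∧
      (∑ i ∈ Finset.univ.filter (fun i : Fin n => i.1 % 2 = 1), l i) = sE (List.ofFn l) := by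
  induction n with
  | zero => simp
  | succ n ih =>
      rw [List.ofFn_succ, sO_cons, sE_cons]
      rw [Finset.sum_filter, Finset.sum_filter, Fin.sum_univ_succ, Fin.sum_univ_succ]
      obtain ⟨ih0, ih1⟩ := ih (fun j => l (Fin.succ j))
      rw [Finset.sum_filter] at ih0 ih1
      have e0 : ∀ i : Fin n, (if i.succ.1 % 2 = 0 then l i.succ else 0)
          = (if i.1 % 2 = 1 then l i.succ else 0) := by
        intro i
        refine if_congr ?_ rfl rfl
        rw [Fin.val_succ]
        omega
      have e1 : ∀ i : Fin n, (if i.succ.1 % 2 = 1 then l i.succ else 0)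
          = (if i.1 % 2 = 0 then l i.succ else 0) := by
        intro i
        refine if_congr ?_ rfl rfl
        rw [Fin.val_succ]
        omega
      constructor
      · rw [if_pos (show (0 : Fin (n+1)).1 % 2 = 0 from rfl)]
        simp only [e0]
        omega
      · rw [if_neg (show ¬(0 : Fin (n+1)).1 % 2 = 1 by simp)]
        simp only [e1]
        omega

lemma weight_bridge (n : ℕ) (m : Fin n → ℕ) :
    (∑ i : Fin n, (i.1 + 1) * m i) = wA (List.ofFn m) ∧
      (∑ i : Fin n, i.1 * m i) = wB (List.ofFn m) := by
  induction n with
  | zero => simp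
  | succ n ih =>
      rw [List.ofFn_succ, wA_cons, wB_cons, List.sum_ofFn]
      obtain ⟨ihA, ihB⟩ := ih (fun j => m (Fin.succ j))
      have eA : ∀ i : Fin n, (i.succ.1 + 1) * m i.succ
          = (i.1 + 1) * m i.succ + m i.succ := by
        intro i; rw [Fin.val_succ]; ring
      have eB : ∀ i : Fin n, i.succ.1 * m i.succ = (i.1 + 1) * m i.succ := by
        intro i; rw [Fin.val_succ]
      constructor
      · rw [Fin.sum_univ_succ]
        simp only [eA]
        rw [Finset.sum_add_distrib]
        simp only [Fin.val_zero, one_mul, zero_mul, zero_add]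
        omega
      · rw [Fin.sum_univ_succ]
        simp only [eB, Fin.val_zero, zero_mul, zero_add]
        omega

lemma cast_ineq (n i a b : ℕ) (h : i + 1 < n) :
    (n - i) * a ≤ (n - 1 - i) * b ↔ ((n : ℤ) - i) * a ≤ ((n : ℤ) - 1 - i) * b := by
  have e1 : ((n - i : ℕ) : ℤ) = (n : ℤ) - i := by omega
  have e2 : ((n - 1 - i : ℕ) : ℤ) = (n : ℤ) - 1 - i := by omega
  rw [← Nat.cast_le (α := ℤ), Nat.cast_mul, Nat.cast_mul, e1, e2]

lemma LHL_iff_forall (L : List ℕ) :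
    LHL L ↔ ∀ (i : ℕ) (h : i + 1 < L.length),
      (L.length - i) * L[i+1] ≤ (L.length - 1 - i) * L[i]'(by omega) := by
  induction L with
  | nil => simp [LHL_nil]
  | cons x t ih =>
      cases t with
      | nil =>
          simp only [LHL_single, true_iff, List.length_cons, List.length_nil]
          intro i h
          omega
      | cons y s =>
          show ((s.length + 2) * y ≤ (s.length + 1) * x) ∧ LHL (y :: s) ↔ _
          rw [ih]
          constructor
          · rintro ⟨h1, h2⟩ i h
            match i with
            | 0 =>
                simp only [List.getElem_cons_succ, List.getElem_cons_zero,
                  List.length_cons, Nat.sub_zero]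
                have e1 : s.length + 1 + 1 - 1 = s.length + 1 := by omega
                rw [e1]
                exact h1
            | Nat.succ i =>
                have hy : i + 1 < (y :: s).length := by
                  simp only [List.length_cons] at h ⊢; omega
                have := h2 i hy
                simp only [List.getElem_cons_succ, List.length_cons] at this ⊢
                have e1 : s.length + 1 + 1 - (i + 1) = s.length + 1 - i := by omega
                have e2 : s.length + 1 + 1 - 1 - (i + 1) = s.length + 1 - 1 - i := by omega
                rw [e1, e2]
                exact this
          · intro h
            constructor
            · have := h 0 (by simp)
              simp only [List.getElem_cons_succ, List.getElem_cons_zero,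
                List.length_cons, Nat.sub_zero] at this
              have e1 : s.length + 1 + 1 - 1 = s.length + 1 := by omega
              rw [e1] at this
              exact this
            · intro i hy
              have hx : i + 1 + 1 < (x :: y :: s).length := by
                simp only [List.length_cons] at hy ⊢; omega
              have := h (i + 1) hx
              simp only [List.getElem_cons_succ, List.length_cons] at this ⊢
              have e1 : s.length + 1 + 1 - (i + 1) = s.length + 1 - i := by omega
              have e2 : s.length + 1 + 1 - 1 - (i + 1) = s.length + 1 - 1 - i := by omega
              rw [e1, e2] at this
              exact this

lemma LHF_iff (n : ℕ) (l : Fin n → ℕ) :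
    (∀ i : Fin n, ∀ h : i.1 + 1 < n,
        ((n : ℤ) - i.1) * (l ⟨i.1 + 1, h⟩ : ℤ) ≤ ((n : ℤ) - 1 - i.1) * (l i : ℤ))
      ↔ LHL (List.ofFn l) := by
  rw [LHL_iff_forall]
  simp only [List.length_ofFn, List.getElem_ofFn]
  constructor
  · intro h i hi
    rw [cast_ineq n i _ _ hi]
    exact h ⟨i, by omega⟩ hi
  · intro h i hi
    rw [← cast_ineq n i.1 _ _ hi]
    exact h i.1 hi

/-- the equivalence between functions `Fin n → ℕ` and lists of length `n`. -/
def ofFnEquiv (n : ℕ) : (Fin n → ℕ) ≃ {L : List ℕ // L.length = n} where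
  toFun f := ⟨List.ofFn f, List.length_ofFn⟩
  invFun L := fun i => L.1[(i : ℕ)]'(by rw [L.2]; exact i.isLt)
  left_inv f := by funext i; simp
  right_inv L := Subtype.ext (List.ext_getElem (by simp [L.2]) (fun i h1 h2 => by simp))

/-- the central cardinality identity. -/
lemma card_LH_eq (n a b : ℕ) :
    Nat.card {l : Fin n → ℕ //
        (∀ i : Fin n, ∀ h : i.1 + 1 < n,
          ((n : ℤ) - i.1) * (l ⟨i.1 + 1, h⟩ : ℤ) ≤ ((n : ℤ) - 1 - i.1) * (l i : ℤ)) ∧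
        (∑ i ∈ Finset.univ.filter (fun i : Fin n => i.1 % 2 = 0), l i) = a ∧
        (∑ i ∈ Finset.univ.filter (fun i : Fin n => i.1 % 2 = 1), l i) = b}
      = Nat.card {m : Fin n → ℕ //
          (∑ i : Fin n, (i.1 + 1) * m i) = a ∧ (∑ i : Fin n, i.1 * m i) = b} := by
  apply Nat.card_congr
  have eLH : {l : Fin n → ℕ //
        (∀ i : Fin n, ∀ h : i.1 + 1 < n,
          ((n : ℤ) - i.1) * (l ⟨i.1 + 1, h⟩ : ℤ) ≤ ((n : ℤ) - 1 - i.1) * (l i : ℤ)) ∧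
        (∑ i ∈ Finset.univ.filter (fun i : Fin n => i.1 % 2 = 0), l i) = a ∧
        (∑ i ∈ Finset.univ.filter (fun i : Fin n => i.1 % 2 = 1), l i) = b} ≃
      {L : {L : List ℕ // L.length = n} // LHL L.1 ∧ sO L.1 = a ∧ sE L.1 = b} :=
    (ofFnEquiv n).subtypeEquiv (fun l => by
      rw [LHF_iff, (stat_bridge n l).1, (stat_bridge n l).2]
      exact Iff.rfl)
  have eW : {m : Fin n → ℕ //
        (∑ i : Fin n, (i.1 + 1) * m i) = a ∧ (∑ i : Fin n, i.1 * m i) = b} ≃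
      {M : {L : List ℕ // L.length = n} // wA M.1 = a ∧ wB M.1 = b} :=
    (ofFnEquiv n).subtypeEquiv (fun m => by
      rw [(weight_bridge n m).1, (weight_bridge n m).2]
      exact Iff.rfl)
  exact eLH.trans ((Equiv.subtypeSubtypeEquivSubtypeInter
      (fun L : List ℕ => L.length = n) (fun L => LHL L ∧ sO L = a ∧ sE L = b)).trans
    ((listEquiv n a b).trans ((Equiv.subtypeSubtypeEquivSubtypeInter
      (fun L : List ℕ => L.length = n) (fun L => wA L = a ∧ wB L = b)).symm.trans eW.symm)))

/-! ## The free side count -/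

/-- abbreviation for the free count set. -/
abbrev Mset (n a b : ℕ) : Type :=
  {m : Fin n → ℕ // (∑ i : Fin n, (i.1 + 1) * m i) = a ∧ (∑ i : Fin n, i.1 * m i) = b}

instance Mset_finite (n a b : ℕ) : Finite (Mset n a b) := by
  have hbnd : ∀ (m : Mset n a b) (i : Fin n), m.1 i < a + 1 := by
    intro m i
    have h1 : (i.1 + 1) * m.1 i ≤ a :=
      le_trans (Finset.single_le_sum (f := fun i => (i.1 + 1) * m.1 i)
        (fun _ _ => Nat.zero_le _) (Finset.mem_univ i)) (le_of_eq m.2.1)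
    have h2 : m.1 i ≤ (i.1 + 1) * m.1 i := Nat.le_mul_of_pos_left _ (by omega)
    omega
  exact Finite.of_injective
    (fun m => (fun i => (⟨m.1 i, hbnd m i⟩ : Fin (a + 1)) : Fin n → Fin (a + 1)))
    (fun m1 m2 h => Subtype.ext (funext fun i => by
      have := congrFun h i
      simpa [Fin.mk.injEq] using this))

lemma Mset_card_zero (a b : ℕ) :
    Nat.card (Mset 0 a b) = if a = 0 ∧ b = 0 then 1 else 0 := by
  split_ifs with h
  · obtain ⟨rfl, rfl⟩ := h
    haveI : Unique (Mset 0 0 0) :=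
      ⟨⟨⟨fun i => i.elim0, by simp⟩⟩, by
        intro x; apply Subtype.ext; funext i; exact i.elim0⟩
    exact Nat.card_unique
  · haveI : IsEmpty (Mset 0 a b) := ⟨fun m => h ⟨by simpa using m.2.1.symm,
      by simpa using m.2.2.symm⟩⟩
    exact Nat.card_of_isEmpty

lemma fw_split (n : ℕ) (m : Fin (n + 1) → ℕ) :
    (∑ i : Fin (n + 1), (i.1 + 1) * m i)
        = (∑ i : Fin n, (i.1 + 1) * m i.castSucc) + (n + 1) * m (Fin.last n) ∧
      (∑ i : Fin (n + 1), i.1 * m i)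
        = (∑ i : Fin n, i.1 * m i.castSucc) + n * m (Fin.last n) := by
  constructor
  · rw [Fin.sum_univ_castSucc]
    simp [Fin.coe_castSucc, Fin.val_last]
  · rw [Fin.sum_univ_castSucc]
    simp [Fin.coe_castSucc, Fin.val_last]

set_option maxHeartbeats 1000000 in
lemma Mset_card_step (n a b : ℕ) :
    Nat.card (Mset (n + 1) a b)
      = Nat.card (Mset n a b)
        + if n + 1 ≤ a ∧ n ≤ b then Nat.card (Mset (n + 1) (a - (n + 1)) (b - n)) else 0 := by
  rw [Nat.card_congr (Equiv.sumCompl (fun s : Mset (n+1) a b => s.1 (Fin.last n) = 0)).symm,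
    Nat.card_sum]
  congr 1
  · -- the `last = 0` part
    apply Nat.card_congr
    refine ⟨fun s => ⟨fun i => s.1.1 i.castSucc, ?_⟩,
      fun m => ⟨⟨Fin.snoc m.1 0, ?_⟩, ?_⟩, ?_, ?_⟩
    · obtain ⟨hA, hB⟩ := s.1.2
      have h0 : s.1.1 (Fin.last n) = 0 := s.2
      obtain ⟨e1, e2⟩ := fw_split n s.1.1
      rw [e1, h0, Nat.mul_zero, Nat.add_zero] at hA
      rw [e2, h0, Nat.mul_zero, Nat.add_zero] at hB
      constructor
      · show (∑ i : Fin n, (i.1 + 1) * s.1.1 i.castSucc) = a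
        omega
      · show (∑ i : Fin n, i.1 * s.1.1 i.castSucc) = b
        omega
    · obtain ⟨hA, hB⟩ := m.2
      obtain ⟨e1, e2⟩ := fw_split n (Fin.snoc m.1 0)
      rw [e1, e2]
      simp only [Fin.snoc_castSucc, Fin.snoc_last]
      omega
    · simp [Fin.snoc_last]
    · intro s
      apply Subtype.ext
      apply Subtype.ext
      funext i
      refine Fin.lastCases ?_ ?_ i
      · simp [Fin.snoc_last, s.2.symm]
      · intro j
        simp [Fin.snoc_castSucc]
    · intro m
      apply Subtype.ext
      funext i
      simp [Fin.snoc_castSucc]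
  · -- the `last ≠ 0` part
    split_ifs with h
    · apply Nat.card_congr
      refine ⟨fun s => ⟨Function.update s.1.1 (Fin.last n) (s.1.1 (Fin.last n) - 1), ?_⟩,
        fun m => ⟨⟨Function.update m.1 (Fin.last n) (m.1 (Fin.last n) + 1), ?_⟩, ?_⟩, ?_, ?_⟩
      · obtain ⟨hA, hB⟩ := s.1.2
        have h0 : s.1.1 (Fin.last n) ≠ 0 := s.2
        obtain ⟨e1, e2⟩ := fw_split n (Function.update s.1.1 (Fin.last n) (s.1.1 (Fin.last n) - 1))
        obtain ⟨f1, f2⟩ := fw_split n s.1.1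
        rw [e1, e2]
        have hc : ∀ i : Fin n, Function.update s.1.1 (Fin.last n) (s.1.1 (Fin.last n) - 1) i.castSucc
            = s.1.1 i.castSucc := fun i =>
          Function.update_of_ne (Fin.ne_last_of_lt (Fin.castSucc_lt_last i)) _ _
        simp only [hc, Function.update_self]
        obtain ⟨k, hk⟩ : ∃ k, s.1.1 (Fin.last n) = k + 1 := ⟨_, (Nat.succ_pred_eq_of_pos (Nat.pos_of_ne_zero h0)).symm⟩
        rw [hk] at f1 f2
        rw [hk]
        simp only [Nat.add_sub_cancel, Nat.mul_succ] at f1 f2 ⊢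
        omega
      · obtain ⟨hA, hB⟩ := m.2
        obtain ⟨e1, e2⟩ := fw_split n (Function.update m.1 (Fin.last n) (m.1 (Fin.last n) + 1))
        obtain ⟨f1, f2⟩ := fw_split n m.1
        rw [e1, e2]
        have hc : ∀ i : Fin n, Function.update m.1 (Fin.last n) (m.1 (Fin.last n) + 1) i.castSucc
            = m.1 i.castSucc := fun i =>
          Function.update_of_ne (Fin.ne_last_of_lt (Fin.castSucc_lt_last i)) _ _
        simp only [hc, Function.update_self, Nat.mul_succ]
        omega
      · show ¬ Function.update m.1 (Fin.last n) (m.1 (Fin.last n) + 1) (Fin.last n) = 0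
        rw [Function.update_self]
        omega
      · intro s
        apply Subtype.ext
        apply Subtype.ext
        funext i
        rcases eq_or_ne i (Fin.last n) with rfl | hi
        · simp only [Function.update_self]
          have h0 : s.1.1 (Fin.last n) ≠ 0 := s.2
          omega
        · simp only [Function.update_of_ne hi]
      · intro m
        apply Subtype.ext
        funext i
        rcases eq_or_ne i (Fin.last n) with rfl | hi
        · simp only [Function.update_self, Nat.add_sub_cancel]
        · simp only [Function.update_of_ne hi]
    · haveI : IsEmpty {s : Mset (n+1) a b // ¬ s.1 (Fin.last n) = 0} := by
        refine ⟨fun s => ?_⟩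
        obtain ⟨hA, hB⟩ := s.1.2
        obtain ⟨f1, f2⟩ := fw_split n s.1.1
        have h0 : s.1.1 (Fin.last n) ≠ 0 := s.2
        apply h
        constructor
        · rw [f1] at hA
          have := Nat.le_mul_of_pos_right (n+1) (Nat.pos_of_ne_zero h0)
          omega
        · rw [f2] at hB
          rcases Nat.eq_zero_or_pos n with rfl | hn
          · omega
          · have := Nat.le_mul_of_pos_right n (Nat.pos_of_ne_zero h0)
            omega
      exact Nat.card_of_isEmpty

/-! ## Power series side -/

noncomputable section PS

open MvPowerSeries

def XX (i : ℕ) : MvPowerSeries (Fin 2) ℚ :=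
  (MvPowerSeries.X 0) ^ (i + 1) * (MvPowerSeries.X 1) ^ i

def vv (i : ℕ) : Fin 2 →₀ ℕ := Finsupp.single 0 (i + 1) + Finsupp.single 1 i

lemma vv_apply0 (i : ℕ) : vv i 0 = i + 1 := by
  simp [vv, Finsupp.single_apply]

lemma vv_apply1 (i : ℕ) : vv i 1 = i := by
  simp [vv, Finsupp.single_apply]

lemma XX_eq (i : ℕ) : XX i = MvPowerSeries.monomial (vv i) 1 := by
  rw [XX, MvPowerSeries.X_pow_eq, MvPowerSeries.X_pow_eq, MvPowerSeries.monomial_mul_monomial,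
    one_mul, vv]

lemma cc_ne (i : ℕ) : MvPowerSeries.constantCoeff (1 - XX i) ≠ 0 := by
  have hv : vv i ≠ 0 := by
    intro hcon
    have := DFunLike.congr_fun hcon 0
    rw [vv_apply0] at this
    simp at this
  rw [map_sub, map_one, XX_eq, ← MvPowerSeries.coeff_zero_eq_constantCoeff_apply,
    MvPowerSeries.coeff_monomial, if_neg (by exact fun h => hv h.symm)]
  norm_num

lemma vv_le_iff (n : ℕ) (d : Fin 2 →₀ ℕ) : vv n ≤ d ↔ (n + 1 ≤ d 0 ∧ n ≤ d 1) := by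
  rw [Finsupp.le_def]
  constructor
  · intro h
    exact ⟨by have := h 0; rwa [vv_apply0] at this, by have := h 1; rwa [vv_apply1] at this⟩
  · intro h s
    match s with
    | (0 : Fin 2) => rw [vv_apply0]; exact h.1
    | (1 : Fin 2) => rw [vv_apply1]; exact h.2

lemma step_formula (n : ℕ) (d : Fin 2 →₀ ℕ) :
    MvPowerSeries.coeff d (∏ i ∈ Finset.range (n + 1), (1 - XX i)⁻¹)
      = MvPowerSeries.coeff d (∏ i ∈ Finset.range n, (1 - XX i)⁻¹)
        + (if n + 1 ≤ d 0 ∧ n ≤ d 1 then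
            MvPowerSeries.coeff (d - vv n) (∏ i ∈ Finset.range (n + 1), (1 - XX i)⁻¹)
          else 0) := by
  set T := ∏ i ∈ Finset.range (n + 1), (1 - XX i)⁻¹ with hTdef
  set P := ∏ i ∈ Finset.range n, (1 - XX i)⁻¹ with hPdef
  have hT : T = P * (1 - XX n)⁻¹ := Finset.prod_range_succ _ n
  have hmul : T * (1 - XX n) = P := by
    rw [hT, mul_assoc, MvPowerSeries.inv_mul_cancel _ (cc_ne n), mul_one]
  have hTP : T = P + T * XX n := by linear_combination hmul
  have hcoeff : MvPowerSeries.coeff d (T * XX n)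
      = if vv n ≤ d then MvPowerSeries.coeff (d - vv n) T else 0 := by
    rw [XX_eq, MvPowerSeries.coeff_mul_monomial]
    split_ifs <;> simp
  have hgoal : MvPowerSeries.coeff d T
      = MvPowerSeries.coeff d P + (if vv n ≤ d then MvPowerSeries.coeff (d - vv n) T else 0) := by
    conv_lhs => rw [hTP]
    rw [map_add, hcoeff]
  rw [hgoal]
  congr 1
  exact if_congr (vv_le_iff n d) rfl rfl

lemma coeff_prod_eq_card (n : ℕ) (d : Fin 2 →₀ ℕ) :
    MvPowerSeries.coeff d (∏ i ∈ Finset.range n, (1 - XX i)⁻¹)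
      = (Nat.card (Mset n (d 0) (d 1)) : ℚ) := by
  induction n generalizing d with
  | zero =>
      rw [Finset.range_zero, Finset.prod_empty, MvPowerSeries.coeff_one, Mset_card_zero]
      have hd : d = 0 ↔ d 0 = 0 ∧ d 1 = 0 := by
        constructor
        · intro h; simp [h]
        · intro h
          ext s
          match s with
          | (0 : Fin 2) => simpa using h.1
          | (1 : Fin 2) => simpa using h.2
      split_ifs with h1 h2 h2
      · norm_num
      · exact absurd (hd.mp h1) h2
      · exact absurd (hd.mpr h2) h1
      · norm_num
  | succ n ih =>
      suffices H : ∀ (s : ℕ) (d : Fin 2 →₀ ℕ), d 0 ≤ s →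
          MvPowerSeries.coeff d (∏ i ∈ Finset.range (n + 1), (1 - XX i)⁻¹)
            = (Nat.card (Mset (n + 1) (d 0) (d 1)) : ℚ) from H (d 0) d le_rfl
      intro s
      induction s with
      | zero =>
          intro d hd
          rw [step_formula, if_neg (by omega), ih, Mset_card_step, if_neg (by omega)]
          push_cast
          ring
      | succ s ihs =>
          intro d hd
          rw [step_formula, ih, Mset_card_step]
          by_cases h : n + 1 ≤ d 0 ∧ n ≤ d 1
          · rw [if_pos h, if_pos h]
            have hsub0 : (d - vv n) 0 = d 0 - (n + 1) := by
              rw [Finsupp.tsub_apply, vv_apply0]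
            have hsub1 : (d - vv n) 1 = d 1 - n := by
              rw [Finsupp.tsub_apply, vv_apply1]
            rw [ihs (d - vv n) (by omega), hsub0, hsub1]
            push_cast
            ring
          · rw [if_neg h, if_neg h]
            push_cast
            ring

end PS
end LHProof

/-- **The Odd/Even Lecture Hall Theorem** (Bousquet-Mélou–Eriksson).
For `n ≥ 1`, `∑_{λ∈L_n} x^{|λ_o|} y^{|λ_e|} = ∏_{i=1}^{n} 1/(1 - x^i y^{i-1})`
as formal power series in `x = X 0` and `y = X 1`, stated coefficientwise:
`λ_o` is the subsequence of odd-indexed (1-indexed) parts and `λ_e` that of the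
even-indexed parts. -/
theorem odd_even_lecture_hall_theorem (n : ℕ) (hn : 0 < n) (d : Fin 2 →₀ ℕ) :
    (Nat.card {l : Fin n → ℕ //
        (∀ i : Fin n, ∀ h : i.1 + 1 < n,
          ((n : ℤ) - i.1) * (l ⟨i.1 + 1, h⟩ : ℤ) ≤ ((n : ℤ) - 1 - i.1) * (l i : ℤ)) ∧
        (∑ i ∈ Finset.univ.filter (fun i : Fin n => i.1 % 2 = 0), l i) = d 0 ∧
        (∑ i ∈ Finset.univ.filter (fun i : Fin n => i.1 % 2 = 1), l i) = d 1} : ℚ) =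
      MvPowerSeries.coeff d
        (∏ i ∈ Finset.range n,
          (1 - (MvPowerSeries.X 0 : MvPowerSeries (Fin 2) ℚ) ^ (i + 1) *
            MvPowerSeries.X 1 ^ i)⁻¹) := by
  have h1 := LHProof.coeff_prod_eq_card n d
  have h2 : (∏ i ∈ Finset.range n,
      (1 - (MvPowerSeries.X 0 : MvPowerSeries (Fin 2) ℚ) ^ (i + 1) *
        MvPowerSeries.X 1 ^ i)⁻¹) = ∏ i ∈ Finset.range n, (1 - LHProof.XX i)⁻¹ := rfl
  rw [h2, h1]
  exact_mod_cast congrArg (Nat.cast : ℕ → ℚ) (LHProof.card_LH_eq n (d 0) (d 1))
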